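/- Nonsmooth ITD convergence rate (Theorem 4.1(i), set-valued form): let 0 ≤ q < 1, L, M ≥ 0, R > 0 and Δ₀ ≥ 0. Let ℬ ⊆ ℝ^{d×(d+m)} be a nonempty bounded set of real block matrices with ‖ℬ₁‖_sup ≤ q, and let 𝒮 ⊆ ℝ^{d×m} be a nonempty bounded set with 𝒮 = ℬ(𝒮). Let (Δ_t)_{t≥0} be nonnegative reals with Δ_t ≤ q^t Δ₀ for all t, and set δ_t := 1 if Δ_t > R and δ_t := 0 otherwise, and δ̄_t := (1/t) Σ_{i=0}^{t−1} δ_i for t ≥ 1. Let (𝒜_t)_{t≥0} be nonempty bounded subsets of ℝ^{d×(d+m)} with ‖𝒜_{t,1}‖_sup ≤ q and gap(𝒜_t, ℬ) ≤ (L + (M/R)·δ_t)·Δ_t for every t. Define the ITD sets by 𝒟₀ := {0} and 𝒟_t := 𝒜_{t−1}(𝒟_{t−1}) for t ≥ 1. Then for every t ≥ 1, with B := ‖ℬ₂‖_sup: gap(𝒟_t, 𝒮) ≤ (B/(1−q))·q^t + ((B+1)/(1−q))·(L + (M/R)·δ̄_t)·Δ₀·t·q^{t−1}. -/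

import Mathlib

open scoped Matrix.Norms.L2Operator

/-- The excess (gap) of a set `𝒜` over a set `ℬ` in a normed additive group:
`gap 𝒜 ℬ = sup_{A ∈ 𝒜} inf_{B ∈ ℬ} ‖A - B‖`. -/
noncomputable def gap {E : Type*} [NormedAddCommGroup E] (𝒜 ℬ : Set E) : ℝ :=
  ⨆ A : 𝒜, ⨅ B : ℬ, ‖(A : E) - (B : E)‖

/-- `‖𝒜‖_sup = sup_{A ∈ 𝒜} ‖A‖`. -/
noncomputable def supNorm {E : Type*} [NormedAddCommGroup E] (𝒜 : Set E) : ℝ :=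
  ⨆ A : 𝒜, ‖(A : E)‖

/-- First block `A₁ ∈ ℝ^{n×p₁}` of a block matrix `A = [A₁, A₂] ∈ ℝ^{n×(p₁+p₂)}`. -/
def blk1 {n p₁ p₂ : ℕ} (A : Matrix (Fin n) (Fin (p₁ + p₂)) ℝ) :
    Matrix (Fin n) (Fin p₁) ℝ :=
  A.submatrix id (Fin.castAdd p₂)

/-- Second block `A₂ ∈ ℝ^{n×p₂}` of a block matrix `A = [A₁, A₂] ∈ ℝ^{n×(p₁+p₂)}`. -/
def blk2 {n p₁ p₂ : ℕ} (A : Matrix (Fin n) (Fin (p₁ + p₂)) ℝ) :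
    Matrix (Fin n) (Fin p₂) ℝ :=
  A.submatrix id (Fin.natAdd p₁)

/-- The affine action `𝒜(𝒳) = {A₁ X + A₂ | [A₁, A₂] ∈ 𝒜, X ∈ 𝒳}` of a set of block
matrices `𝒜 ⊆ ℝ^{n×(p₁+p₂)}` on a set of matrices `𝒳 ⊆ ℝ^{p₁×p₂}`. -/
def affAct {n p₁ p₂ : ℕ} (𝒜 : Set (Matrix (Fin n) (Fin (p₁ + p₂)) ℝ))
    (𝒳 : Set (Matrix (Fin p₁) (Fin p₂) ℝ)) : Set (Matrix (Fin n) (Fin p₂) ℝ) :=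
  {Y | ∃ A ∈ 𝒜, ∃ X ∈ 𝒳, Y = blk1 A * X + blk2 A}


open Matrix in
private lemma myL2.norm_one_le (k : ℕ) : ‖(1 : Matrix (Fin k) (Fin k) ℝ)‖ ≤ 1 := by
  have h := Matrix.l2_opNorm_conjTranspose_mul_self (1 : Matrix (Fin k) (Fin k) ℝ)
  simp at h
  nlinarith [norm_nonneg (1 : Matrix (Fin k) (Fin k) ℝ)]

private lemma myL2.submatrix_col_eq_mul {a b N : ℕ} (A : Matrix (Fin a) (Fin N) ℝ)
    (f : Fin b → Fin N) :
    A.submatrix id f = A * ((1 : Matrix (Fin N) (Fin N) ℝ).submatrix id f) := by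
  ext i j
  simp [Matrix.mul_apply, Matrix.one_apply]

open Matrix in
private lemma myL2.J_conjT_mul {b N : ℕ} (f : Fin b → Fin N) (hf : Function.Injective f) :
    ((1 : Matrix (Fin N) (Fin N) ℝ).submatrix id f)ᴴ *
      ((1 : Matrix (Fin N) (Fin N) ℝ).submatrix id f) = 1 := by
  ext j j'
  simp [Matrix.mul_apply, Matrix.one_apply, Matrix.conjTranspose_apply, hf.eq_iff, eq_comm]

private lemma myL2.norm_submatrix_col_le {a b N : ℕ} (A : Matrix (Fin a) (Fin N) ℝ)
    (f : Fin b → Fin N) (hf : Function.Injective f) : ‖A.submatrix id f‖ ≤ ‖A‖ := by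
  set J := (1 : Matrix (Fin N) (Fin N) ℝ).submatrix id f with hJ
  have h1 : ‖J‖ * ‖J‖ = ‖(1 : Matrix (Fin b) (Fin b) ℝ)‖ := by
    rw [← myL2.J_conjT_mul f hf, Matrix.l2_opNorm_conjTranspose_mul_self]
  have h2 : ‖J‖ ≤ 1 := by nlinarith [norm_nonneg J, myL2.norm_one_le b]
  calc ‖A.submatrix id f‖ = ‖A * J‖ := by rw [myL2.submatrix_col_eq_mul]
    _ ≤ ‖A‖ * ‖J‖ := Matrix.l2_opNorm_mul A J
    _ ≤ ‖A‖ * 1 := by nlinarith [norm_nonneg A]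
    _ = ‖A‖ := mul_one _

private lemma myL2.norm_blk1_le {n p₁ p₂ : ℕ} (A : Matrix (Fin n) (Fin (p₁ + p₂)) ℝ) :
    ‖blk1 A‖ ≤ ‖A‖ :=
  myL2.norm_submatrix_col_le A _ (Fin.castAdd_injective _ _)

private lemma myL2.norm_blk2_le {n p₁ p₂ : ℕ} (A : Matrix (Fin n) (Fin (p₁ + p₂)) ℝ) :
    ‖blk2 A‖ ≤ ‖A‖ :=
  myL2.norm_submatrix_col_le A _
    (fun a b h => Fin.ext (by have := congrArg Fin.val h; simpa using this))

private lemma myL2.blk1_sub {n p₁ p₂ : ℕ} (A B : Matrix (Fin n) (Fin (p₁ + p₂)) ℝ) :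
    blk1 (A - B) = blk1 A - blk1 B := rfl

private lemma myL2.blk2_sub {n p₁ p₂ : ℕ} (A B : Matrix (Fin n) (Fin (p₁ + p₂)) ℝ) :
    blk2 (A - B) = blk2 A - blk2 B := rfl

section GapLemmas
variable {E : Type*} [NormedAddCommGroup E] {𝒜 ℬ s : Set E} {c : ℝ}

private lemma my_bddBelow (x : E) : BddBelow (Set.range fun B : ℬ => ‖x - (B : E)‖) :=
  ⟨0, by rintro _ ⟨B, rfl⟩; exact norm_nonneg _⟩

private lemma gap_nonneg : 0 ≤ gap 𝒜 ℬ :=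
  Real.iSup_nonneg fun _ => Real.iInf_nonneg fun _ => norm_nonneg _

private lemma my_bddAbove_inf (h𝒜 : ∃ C, ∀ x ∈ 𝒜, ‖x‖ ≤ C) (hℬ : ℬ.Nonempty) :
    BddAbove (Set.range fun A : 𝒜 => ⨅ B : ℬ, ‖(A : E) - (B : E)‖) := by
  obtain ⟨C, hC⟩ := h𝒜
  obtain ⟨B₀, hB₀⟩ := hℬ
  refine ⟨C + ‖B₀‖, ?_⟩
  rintro _ ⟨A, rfl⟩
  calc (⨅ B : ℬ, ‖(A : E) - (B : E)‖) ≤ ‖(A : E) - B₀‖ := ciInf_le (my_bddBelow _) ⟨B₀, hB₀⟩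
    _ ≤ ‖(A : E)‖ + ‖B₀‖ := norm_sub_le _ _
    _ ≤ C + ‖B₀‖ := by have := hC A A.2; linarith

private lemma gap_le_of (hc : 0 ≤ c) (h : ∀ A ∈ 𝒜, ∀ ε > (0:ℝ), ∃ B ∈ ℬ, ‖A - B‖ ≤ c + ε) :
    gap 𝒜 ℬ ≤ c := by
  refine Real.iSup_le (fun A => le_of_forall_pos_le_add fun ε hε => ?_) hc
  obtain ⟨B, hB, hle⟩ := h A A.2 ε hε
  exact le_trans (ciInf_le (my_bddBelow _) ⟨B, hB⟩) hle

private lemma gap_exists_near (h𝒜 : ∃ C, ∀ x ∈ 𝒜, ‖x‖ ≤ C) (hℬ : ℬ.Nonempty)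
    {x : E} (hx : x ∈ 𝒜) {ε : ℝ} (hε : 0 < ε) :
    ∃ B ∈ ℬ, ‖x - B‖ < gap 𝒜 ℬ + ε := by
  have h1 : (⨅ B : ℬ, ‖x - (B : E)‖) ≤ gap 𝒜 ℬ :=
    le_ciSup (my_bddAbove_inf h𝒜 hℬ) (⟨x, hx⟩ : 𝒜)
  have h2 : (⨅ B : ℬ, ‖x - (B : E)‖) < gap 𝒜 ℬ + ε := lt_of_le_of_lt h1 (by linarith)
  haveI : Nonempty ℬ := hℬ.to_subtype
  obtain ⟨⟨B, hB⟩, hlt⟩ := exists_lt_of_ciInf_lt h2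
  exact ⟨B, hB, hlt⟩

private lemma supNorm_nonneg : 0 ≤ supNorm s := Real.iSup_nonneg fun x => norm_nonneg _

private lemma norm_le_supNorm (hb : ∃ C, ∀ y ∈ s, ‖y‖ ≤ C) {x : E} (hx : x ∈ s) :
    ‖x‖ ≤ supNorm s := by
  obtain ⟨C, hC⟩ := hb
  exact le_ciSup ⟨C, by rintro _ ⟨y, rfl⟩; exact hC y y.2⟩ (⟨x, hx⟩ : s)

private lemma supNorm_le (hc : 0 ≤ c) (h : ∀ x ∈ s, ‖x‖ ≤ c) : supNorm s ≤ c :=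
  Real.iSup_le (fun x => h x x.2) hc

end GapLemmas


set_option maxHeartbeats 1000000 in
/-- Nonsmooth ITD convergence rate (Theorem 4.1(i), set-valued form). -/
theorem itd_rate {d m : ℕ} (q L M R Δ₀ : ℝ)
    (hq0 : 0 ≤ q) (hq1 : q < 1) (hL : 0 ≤ L) (hM : 0 ≤ M) (hR : 0 < R) (hΔ₀ : 0 ≤ Δ₀)
    (ℬ : Set (Matrix (Fin d) (Fin (d + m)) ℝ))
    (hℬne : ℬ.Nonempty) (hℬb : Bornology.IsBounded ℬ)
    (hℬ₁ : supNorm (blk1 '' ℬ) ≤ q)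
    (𝒮 : Set (Matrix (Fin d) (Fin m) ℝ))
    (h𝒮ne : 𝒮.Nonempty) (h𝒮b : Bornology.IsBounded 𝒮)
    (h𝒮fix : 𝒮 = affAct ℬ 𝒮)
    (Δ : ℕ → ℝ) (hΔnn : ∀ t, 0 ≤ Δ t) (hΔ : ∀ t, Δ t ≤ q ^ t * Δ₀)
    (𝒜 : ℕ → Set (Matrix (Fin d) (Fin (d + m)) ℝ))
    (h𝒜ne : ∀ t, (𝒜 t).Nonempty) (h𝒜b : ∀ t, Bornology.IsBounded (𝒜 t))
    (h𝒜₁ : ∀ t, supNorm (blk1 '' 𝒜 t) ≤ q)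
    (h𝒜gap : ∀ t, gap (𝒜 t) ℬ ≤ (L + (M / R) * (if R < Δ t then 1 else 0)) * Δ t)
    (𝒟 : ℕ → Set (Matrix (Fin d) (Fin m) ℝ))
    (h𝒟0 : 𝒟 0 = {0})
    (h𝒟succ : ∀ t, 𝒟 (t + 1) = affAct (𝒜 t) (𝒟 t)) :
    ∀ t : ℕ, 1 ≤ t →
      gap (𝒟 t) 𝒮 ≤
        supNorm (blk2 '' ℬ) / (1 - q) * q ^ t +
          (supNorm (blk2 '' ℬ) + 1) / (1 - q) *
            (L + (M / R) *
              ((1 / (t : ℝ)) * ∑ i ∈ Finset.range t, (if R < Δ i then (1 : ℝ) else 0))) *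
            Δ₀ * t * q ^ (t - 1) := by
  have hqlt : (0:ℝ) < 1 - q := by linarith
  have hMR : 0 ≤ M / R := div_nonneg hM hR.le
  -- bounds extracted from boundedness
  obtain ⟨Nℬ, hNℬ⟩ := isBounded_iff_forall_norm_le.mp hℬb
  obtain ⟨N𝒮, hN𝒮⟩ := isBounded_iff_forall_norm_le.mp h𝒮b
  have hℬ1b : ∃ C, ∀ y ∈ blk1 '' ℬ, ‖y‖ ≤ C :=
    ⟨Nℬ, by rintro _ ⟨A, hA, rfl⟩; exact le_trans (myL2.norm_blk1_le A) (hNℬ A hA)⟩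
  have hℬ2b : ∃ C, ∀ y ∈ blk2 '' ℬ, ‖y‖ ≤ C :=
    ⟨Nℬ, by rintro _ ⟨A, hA, rfl⟩; exact le_trans (myL2.norm_blk2_le A) (hNℬ A hA)⟩
  have hℬ1 : ∀ A ∈ ℬ, ‖blk1 A‖ ≤ q := fun A hA =>
    le_trans (norm_le_supNorm hℬ1b (Set.mem_image_of_mem _ hA)) hℬ₁
  set Bc := supNorm (blk2 '' ℬ) with hBc
  have hℬ2 : ∀ A ∈ ℬ, ‖blk2 A‖ ≤ Bc := fun A hA =>
    norm_le_supNorm hℬ2b (Set.mem_image_of_mem _ hA)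
  have hBnn : 0 ≤ Bc := supNorm_nonneg
  have hA1 : ∀ t, ∀ A ∈ 𝒜 t, ‖blk1 A‖ ≤ q := by
    intro t A hA
    obtain ⟨N, hN⟩ := isBounded_iff_forall_norm_le.mp (h𝒜b t)
    refine le_trans (norm_le_supNorm ?_ (Set.mem_image_of_mem _ hA)) (h𝒜₁ t)
    exact ⟨N, by rintro _ ⟨A', hA', rfl⟩; exact le_trans (myL2.norm_blk1_le A') (hN A' hA')⟩
  set SS := supNorm 𝒮 with hSS
  have hSSnn : 0 ≤ SS := supNorm_nonneg
  have hS : ∀ S ∈ 𝒮, ‖S‖ ≤ SS := fun S hSm => norm_le_supNorm ⟨N𝒮, hN𝒮⟩ hSm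
  have hSSrec : SS ≤ q * SS + Bc := by
    refine supNorm_le (by nlinarith) ?_
    intro S hSm
    rw [h𝒮fix] at hSm
    obtain ⟨Bm, hBm, S₁, hS₁, rfl⟩ := hSm
    calc ‖blk1 Bm * S₁ + blk2 Bm‖ ≤ ‖blk1 Bm * S₁‖ + ‖blk2 Bm‖ := norm_add_le _ _
      _ ≤ ‖blk1 Bm‖ * ‖S₁‖ + ‖blk2 Bm‖ := by
          have := Matrix.l2_opNorm_mul (blk1 Bm) S₁; linarith
      _ ≤ q * SS + Bc := by
          have h1 := hℬ1 Bm hBm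
          have h2 := hS S₁ hS₁
          have h3 := hℬ2 Bm hBm
          have := mul_le_mul h1 h2 (norm_nonneg S₁) hq0
          linarith
  have hSSle : SS ≤ Bc / (1 - q) := by
    rw [le_div_iff₀ hqlt]; nlinarith
  -- nonemptiness and boundedness of the iterates
  have hD : ∀ t, (𝒟 t).Nonempty ∧ ∃ C, ∀ X ∈ 𝒟 t, ‖X‖ ≤ C := by
    intro t
    induction t with
    | zero =>
      rw [h𝒟0]
      exact ⟨⟨0, rfl⟩, 0, by rintro X hX; simp only [Set.mem_singleton_iff] at hX; simp [hX]⟩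
    | succ t ih =>
      obtain ⟨⟨X₀, hX₀⟩, C, hC⟩ := ih
      obtain ⟨A₀, hA₀⟩ := h𝒜ne t
      obtain ⟨N, hN⟩ := isBounded_iff_forall_norm_le.mp (h𝒜b t)
      have hN0 : 0 ≤ N := le_trans (norm_nonneg A₀) (hN A₀ hA₀)
      constructor
      · rw [h𝒟succ]; exact ⟨_, A₀, hA₀, X₀, hX₀, rfl⟩
      · refine ⟨N * max C 0 + N, ?_⟩
        intro Y hY
        rw [h𝒟succ] at hY
        obtain ⟨A, hA, X, hX, rfl⟩ := hY
        have h1 : ‖blk1 A‖ ≤ N := le_trans (myL2.norm_blk1_le A) (hN A hA)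
        have h2 : ‖X‖ ≤ max C 0 := le_trans (hC X hX) (le_max_left _ _)
        have h3 : ‖blk2 A‖ ≤ N := le_trans (myL2.norm_blk2_le A) (hN A hA)
        have h4 := mul_le_mul h1 h2 (norm_nonneg X) hN0
        have h5 := Matrix.l2_opNorm_mul (blk1 A) X
        calc ‖blk1 A * X + blk2 A‖ ≤ ‖blk1 A * X‖ + ‖blk2 A‖ := norm_add_le _ _
          _ ≤ N * max C 0 + N := by linarith
  -- one-step recursion
  have hrec : ∀ t, gap (𝒟 (t+1)) 𝒮 ≤ q * gap (𝒟 t) 𝒮 + (SS + 1) * gap (𝒜 t) ℬ := by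
    intro t
    have hg0 : 0 ≤ gap (𝒟 t) 𝒮 := gap_nonneg
    have hh0 : 0 ≤ gap (𝒜 t) ℬ := gap_nonneg
    refine gap_le_of (by nlinarith) ?_
    intro D hDm ε hε
    rw [h𝒟succ] at hDm
    obtain ⟨A, hA, X, hX, rfl⟩ := hDm
    have hSS2 : (0:ℝ) < SS + 2 := by linarith
    have hε2 : (0:ℝ) < ε / 2 := by linarith
    have hε3 : (0:ℝ) < ε / (2 * (SS + 2)) := div_pos hε (by linarith)
    obtain ⟨Bm, hBm, hBlt⟩ :=
      gap_exists_near (isBounded_iff_forall_norm_le.mp (h𝒜b t)) hℬne hA hε3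
    obtain ⟨S, hSm, hSlt⟩ := gap_exists_near (hD t).2 h𝒮ne hX hε2
    refine ⟨blk1 Bm * S + blk2 Bm, by rw [h𝒮fix]; exact ⟨Bm, hBm, S, hSm, rfl⟩, ?_⟩
    have hkey : blk1 A * X + blk2 A - (blk1 Bm * S + blk2 Bm)
        = blk1 A * (X - S) + (blk1 A - blk1 Bm) * S + (blk2 A - blk2 Bm) := by
      rw [Matrix.mul_sub, Matrix.sub_mul]; abel
    have n1 : ‖blk1 A * (X - S)‖ ≤ q * ‖X - S‖ :=
      le_trans (Matrix.l2_opNorm_mul _ _)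
        (mul_le_mul_of_nonneg_right (hA1 t A hA) (norm_nonneg _))
    have n2 : ‖(blk1 A - blk1 Bm) * S‖ ≤ ‖A - Bm‖ * SS := by
      calc ‖(blk1 A - blk1 Bm) * S‖ ≤ ‖blk1 A - blk1 Bm‖ * ‖S‖ := Matrix.l2_opNorm_mul _ _
        _ ≤ ‖A - Bm‖ * SS := by
            have hb1 : ‖blk1 A - blk1 Bm‖ ≤ ‖A - Bm‖ := by
              rw [← myL2.blk1_sub]; exact myL2.norm_blk1_le _
            exact mul_le_mul hb1 (hS S hSm) (norm_nonneg _) (norm_nonneg _)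
    have n3 : ‖blk2 A - blk2 Bm‖ ≤ ‖A - Bm‖ := by
      rw [← myL2.blk2_sub]; exact myL2.norm_blk2_le _
    have hq2 : q * ‖X - S‖ ≤ q * gap (𝒟 t) 𝒮 + ε / 2 := by
      have := mul_le_mul_of_nonneg_left hSlt.le hq0
      nlinarith
    have hb2 : (SS + 1) * ‖A - Bm‖ ≤ (SS + 1) * gap (𝒜 t) ℬ + ε / 2 := by
      have h6 := mul_le_mul_of_nonneg_left hBlt.le (by linarith : (0:ℝ) ≤ SS + 1)
      have h7 : (SS + 1) * (ε / (2 * (SS + 2))) ≤ ε / 2 := by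
        rw [mul_div_assoc', div_le_div_iff₀ (by linarith) two_pos]
        nlinarith
      nlinarith
    calc ‖blk1 A * X + blk2 A - (blk1 Bm * S + blk2 Bm)‖
        = ‖blk1 A * (X - S) + (blk1 A - blk1 Bm) * S + (blk2 A - blk2 Bm)‖ := by rw [hkey]
      _ ≤ ‖blk1 A * (X - S) + (blk1 A - blk1 Bm) * S‖ + ‖blk2 A - blk2 Bm‖ := norm_add_le _ _
      _ ≤ ‖blk1 A * (X - S)‖ + ‖(blk1 A - blk1 Bm) * S‖ + ‖blk2 A - blk2 Bm‖ := by
          have := norm_add_le (blk1 A * (X - S)) ((blk1 A - blk1 Bm) * S); linarith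
      _ ≤ q * gap (𝒟 t) 𝒮 + (SS + 1) * gap (𝒜 t) ℬ + ε := by
          have hb3 : ‖A - Bm‖ * SS + ‖A - Bm‖ = (SS + 1) * ‖A - Bm‖ := by ring
          linarith
  -- per-step gap bound for 𝒜
  have hterm_nn : ∀ i : ℕ, 0 ≤ L + M / R * (if R < Δ i then (1:ℝ) else 0) := by
    intro i; split_ifs <;> nlinarith
  have hh_le : ∀ i, gap (𝒜 i) ℬ ≤ (L + M / R * (if R < Δ i then (1:ℝ) else 0)) * (q ^ i * Δ₀) :=
    fun i => le_trans (h𝒜gap i) (mul_le_mul_of_nonneg_left (hΔ i) (hterm_nn i))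
  have hsum_nn : ∀ t, 0 ≤ ∑ i ∈ Finset.range t, (L + M / R * (if R < Δ i then (1:ℝ) else 0)) :=
    fun t => Finset.sum_nonneg fun i _ => hterm_nn i
  -- unrolled bound
  have claim : ∀ t, gap (𝒟 t) 𝒮 ≤ q ^ t * SS +
      (SS + 1) * Δ₀ * (∑ i ∈ Finset.range t, (L + M / R * (if R < Δ i then (1:ℝ) else 0)))
        * q ^ (t - 1) := by
    intro t
    induction t with
    | zero =>
      simp only [Finset.range_zero, Finset.sum_empty, pow_zero, one_mul, mul_zero, zero_mul,
        Nat.zero_sub, add_zero]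
      refine gap_le_of hSSnn ?_
      intro X hX ε hε
      rw [h𝒟0] at hX
      simp only [Set.mem_singleton_iff] at hX
      obtain ⟨S₀, hS₀⟩ := h𝒮ne
      refine ⟨S₀, hS₀, ?_⟩
      rw [hX, zero_sub, norm_neg]
      have := hS S₀ hS₀; linarith
    | succ t ih =>
      set St := ∑ i ∈ Finset.range t, (L + M / R * (if R < Δ i then (1:ℝ) else 0)) with hSt
      have hqpow : q * q ^ (t - 1) ≤ q ^ t := by
        cases t with
        | zero => simpa using hq1.le
        | succ t => rw [Nat.add_sub_cancel, ← pow_succ']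
      have hc : (0:ℝ) ≤ SS + 1 := by linarith
      have e1 : 0 ≤ (SS + 1) * Δ₀ * St := mul_nonneg (mul_nonneg hc hΔ₀) (hsum_nn t)
      have e2 : q * ((SS + 1) * Δ₀ * St * q ^ (t - 1)) ≤ (SS + 1) * Δ₀ * St * q ^ t := by
        calc q * ((SS + 1) * Δ₀ * St * q ^ (t - 1))
            = ((SS + 1) * Δ₀ * St) * (q * q ^ (t - 1)) := by ring
          _ ≤ ((SS + 1) * Δ₀ * St) * q ^ t := mul_le_mul_of_nonneg_left hqpow e1
          _ = (SS + 1) * Δ₀ * St * q ^ t := by ring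
      have e3 : (SS + 1) * gap (𝒜 t) ℬ
          ≤ (SS + 1) * Δ₀ * (L + M / R * (if R < Δ t then (1:ℝ) else 0)) * q ^ t := by
        calc (SS + 1) * gap (𝒜 t) ℬ
            ≤ (SS + 1) * ((L + M / R * (if R < Δ t then (1:ℝ) else 0)) * (q ^ t * Δ₀)) :=
              mul_le_mul_of_nonneg_left (hh_le t) hc
          _ = (SS + 1) * Δ₀ * (L + M / R * (if R < Δ t then (1:ℝ) else 0)) * q ^ t := by ring
      have e4 : q * gap (𝒟 t) 𝒮 ≤ q * (q ^ t * SS + (SS + 1) * Δ₀ * St * q ^ (t - 1)) :=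
        mul_le_mul_of_nonneg_left ih hq0
      have e5 : q * (q ^ t * SS) = q ^ (t + 1) * SS := by rw [pow_succ']; ring
      have hsum_succ : (∑ i ∈ Finset.range (t + 1),
          (L + M / R * (if R < Δ i then (1:ℝ) else 0)))
          = St + (L + M / R * (if R < Δ t then (1:ℝ) else 0)) := Finset.sum_range_succ _ _
      have step := hrec t
      rw [Nat.add_sub_cancel, hsum_succ]
      have expand : q * (q ^ t * SS + (SS + 1) * Δ₀ * St * q ^ (t - 1))
          = q * (q ^ t * SS) + q * ((SS + 1) * Δ₀ * St * q ^ (t - 1)) := by ring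
      have final : (SS + 1) * Δ₀ * (St + (L + M / R * (if R < Δ t then (1:ℝ) else 0))) * q ^ t
          = (SS + 1) * Δ₀ * St * q ^ t
            + (SS + 1) * Δ₀ * (L + M / R * (if R < Δ t then (1:ℝ) else 0)) * q ^ t := by ring
      linarith [e2, e3, e4, e5 ▸ le_refl (q ^ (t + 1) * SS)]
  -- conclusion
  intro t ht
  have htpos : (0:ℝ) < (t:ℝ) := by exact_mod_cast ht
  set Dδ := ∑ i ∈ Finset.range t, (if R < Δ i then (1:ℝ) else 0) with hDδ
  set St := ∑ i ∈ Finset.range t, (L + M / R * (if R < Δ i then (1:ℝ) else 0)) with hSt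
  have hSeq : St = (t:ℝ) * L + M / R * Dδ := by
    rw [hSt, Finset.sum_add_distrib, Finset.sum_const, Finset.card_range, ← Finset.mul_sum,
      nsmul_eq_mul, hDδ]
  have hRHS2 : (L + M / R * ((1 / (t:ℝ)) * Dδ)) * (t:ℝ) = (t:ℝ) * L + M / R * Dδ := by
    field_simp
  have hc2 : SS + 1 ≤ (Bc + 1) / (1 - q) := by
    rw [le_div_iff₀ hqlt]
    have := (le_div_iff₀ hqlt).mp hSSle
    nlinarith
  have hqt : (0:ℝ) ≤ q ^ t := pow_nonneg hq0 t
  have hqt1 : (0:ℝ) ≤ q ^ (t - 1) := pow_nonneg hq0 _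
  have m1 : q ^ t * SS ≤ Bc / (1 - q) * q ^ t := by
    have := mul_le_mul_of_nonneg_left hSSle hqt
    linarith
  have m2 : (SS + 1) * Δ₀ * St * q ^ (t - 1)
      ≤ (Bc + 1) / (1 - q) * Δ₀ * St * q ^ (t - 1) := by
    have h8 : (0:ℝ) ≤ Δ₀ * St * q ^ (t - 1) :=
      mul_nonneg (mul_nonneg hΔ₀ (hsum_nn t)) hqt1
    have := mul_le_mul_of_nonneg_right hc2 h8
    calc (SS + 1) * Δ₀ * St * q ^ (t - 1) = (SS + 1) * (Δ₀ * St * q ^ (t - 1)) := by ring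
      _ ≤ (Bc + 1) / (1 - q) * (Δ₀ * St * q ^ (t - 1)) := this
      _ = (Bc + 1) / (1 - q) * Δ₀ * St * q ^ (t - 1) := by ring
  have heqRHS : (Bc + 1) / (1 - q) * (L + M / R * ((1 / (t:ℝ)) * Dδ)) * Δ₀ * (t:ℝ) * q ^ (t - 1)
      = (Bc + 1) / (1 - q) * Δ₀ * St * q ^ (t - 1) := by
    rw [hSeq, ← hRHS2]
    ring
  calc gap (𝒟 t) 𝒮 ≤ q ^ t * SS + (SS + 1) * Δ₀ * St * q ^ (t - 1) := claim t
    _ ≤ Bc / (1 - q) * q ^ t + (Bc + 1) / (1 - q) * Δ₀ * St * q ^ (t - 1) := by linarith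
    _ = Bc / (1 - q) * q ^ t +
        (Bc + 1) / (1 - q) * (L + M / R * ((1 / (t:ℝ)) * Dδ)) * Δ₀ * (t:ℝ) * q ^ (t - 1) := by
          rw [heqRHS]
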